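/- Let (P_n) be probability measures on R^m converging weakly to P, with random variables X_n ~ P_n satisfying limsup_n E[‖X_n‖] < ∞, and let B_q^k → B_q be q × m matrices with orthonormal rows. Then the pushforward measures (P_n) under x ↦ B_q^k x converge weakly to the pushforward of P under x ↦ B_q x, as n, k → ∞. -/

import Mathlib

open MeasureTheory Filter Topology

set_option maxHeartbeats 1000000 in
/-- Weak convergence of projected measures: if `Pₙ → P` weakly, the first moments of the `Pₙ`
are bounded (limsup finite), and `B_q^k → B_q` are matrices with orthonormal rows, then the
pushforwards of `Pₙ` under `x ↦ B_q^k x` converge weakly to the pushforward of `P` under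
`x ↦ B_q x` as `n, k → ∞`. -/
theorem weak_convergence_of_projections {m q : ℕ}
    (P : ℕ → Measure (EuclideanSpace ℝ (Fin m)))
    (hP : ∀ n, IsProbabilityMeasure (P n))
    (Plim : Measure (EuclideanSpace ℝ (Fin m))) [IsProbabilityMeasure Plim]
    (hweak : ∀ f : BoundedContinuousFunction (EuclideanSpace ℝ (Fin m)) ℝ,
      Tendsto (fun n => ∫ x, f x ∂(P n)) atTop (𝓝 (∫ x, f x ∂Plim)))
    (hmom : limsup (fun n => ∫⁻ x, ENNReal.ofReal ‖x‖ ∂(P n)) atTop < ⊤)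
    (B : ℕ → Matrix (Fin q) (Fin m) ℝ) (hB : ∀ k, B k * (B k).transpose = 1)
    (Blim : Matrix (Fin q) (Fin m) ℝ) (hBlim : Blim * Blim.transpose = 1)
    (hBconv : Tendsto B atTop (𝓝 Blim)) :
    ∀ f : BoundedContinuousFunction (EuclideanSpace ℝ (Fin q)) ℝ,
      Tendsto
        (fun nk : ℕ × ℕ => ∫ y, f y ∂((P nk.1).map
          (fun x => (WithLp.toLp 2 ((B nk.2).mulVec (WithLp.ofLp x)) : EuclideanSpace ℝ (Fin q)))))
        (atTop ×ˢ atTop)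
        (𝓝 (∫ y, f y ∂(Plim.map
          (fun x => (WithLp.toLp 2 (Blim.mulVec (WithLp.ofLp x)) : EuclideanSpace ℝ (Fin q)))))) := by
  intro f
  classical
  -- the matrix-to-continuous-linear-map assignment, as a linear map
  set L : Matrix (Fin q) (Fin m) ℝ →ₗ[ℝ]
      (EuclideanSpace ℝ (Fin m) →L[ℝ] EuclideanSpace ℝ (Fin q)) :=
    (LinearMap.toContinuousLinearMap.toLinearMap.comp
      (Matrix.toEuclideanLin (𝕜 := ℝ) (m := Fin q) (n := Fin m)).toLinearMap) with hLdef
  have hLcont : Continuous L := L.continuous_of_finiteDimensional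
  set T : ℕ → EuclideanSpace ℝ (Fin m) →L[ℝ] EuclideanSpace ℝ (Fin q) :=
    fun k => L (B k) with hTdef
  set Tl : EuclideanSpace ℝ (Fin m) →L[ℝ] EuclideanSpace ℝ (Fin q) := L Blim with hTldef
  have hTconv : Tendsto T atTop (𝓝 Tl) := (hLcont.tendsto _).comp hBconv
  -- integrability of compositions
  have hInt : ∀ (n : ℕ) (S : EuclideanSpace ℝ (Fin m) →L[ℝ] EuclideanSpace ℝ (Fin q)),
      Integrable (fun x => f (S x)) (P n) := by
    intro n S
    haveI := hP n
    exact (f.compContinuous ⟨fun x => S x, S.continuous⟩).integrable (P n)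
  -- rewrite the pushforward integrals
  have hmapk : ∀ n k : ℕ,
      (∫ y, f y ∂((P n).map (fun x => (WithLp.toLp 2 ((B k).mulVec (WithLp.ofLp x)) : EuclideanSpace ℝ (Fin q)))))
        = ∫ x, f (T k x) ∂(P n) := fun n k =>
    integral_map (T k).continuous.measurable.aemeasurable f.continuous.aestronglyMeasurable
  have hmapl :
      (∫ y, f y ∂(Plim.map (fun x => (WithLp.toLp 2 (Blim.mulVec (WithLp.ofLp x)) : EuclideanSpace ℝ (Fin q)))))
        = ∫ x, f (Tl x) ∂Plim :=
    integral_map Tl.continuous.measurable.aemeasurable f.continuous.aestronglyMeasurable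
  simp only [hmapk, hmapl]
  -- decompose
  have hsplit : (fun nk : ℕ × ℕ => ∫ x, f (T nk.2 x) ∂(P nk.1))
      = fun nk : ℕ × ℕ => (∫ x, f (Tl x) ∂(P nk.1))
          + ∫ x, (f (T nk.2 x) - f (Tl x)) ∂(P nk.1) := by
    funext nk
    rw [integral_sub (hInt _ _) (hInt _ _)]
    ring
  rw [hsplit]
  have h1 : Tendsto (fun nk : ℕ × ℕ => ∫ x, f (Tl x) ∂(P nk.1)) (atTop ×ˢ atTop)
      (𝓝 (∫ x, f (Tl x) ∂Plim)) := by
    have := (hweak (f.compContinuous ⟨fun x => Tl x, Tl.continuous⟩)).comp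
      (tendsto_fst : Tendsto Prod.fst ((atTop : Filter ℕ) ×ˢ (atTop : Filter ℕ)) atTop)
    simpa [Function.comp_def] using this
  have h2 : Tendsto (fun nk : ℕ × ℕ => ∫ x, (f (T nk.2 x) - f (Tl x)) ∂(P nk.1))
      (atTop ×ˢ atTop) (𝓝 0) := by
    rw [NormedAddCommGroup.tendsto_nhds_zero]
    intro ε hε
    -- moment bound
    obtain ⟨M, hM1, hM2⟩ := exists_between hmom
    have hevn : ∀ᶠ n in atTop, (∫⁻ x, ENNReal.ofReal ‖x‖ ∂(P n)) < M :=
      eventually_lt_of_limsup_lt hM1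
    set Mr : ℝ := M.toReal with hMrdef
    have hMr : 0 ≤ Mr := ENNReal.toReal_nonneg
    set R : ℝ := max 1 (8 * (‖f‖ + 1) * Mr / ε) with hRdef
    have hR1 : (1 : ℝ) ≤ R := le_max_left _ _
    have hR0 : 0 < R := lt_of_lt_of_le one_pos hR1
    have hRbound : 2 * ‖f‖ * (Mr / R) ≤ ε / 4 := by
      have h8 : 8 * (‖f‖ + 1) * Mr / ε ≤ R := le_max_right _ _
      rw [div_le_iff₀ hε] at h8
      rw [← mul_div_assoc, div_le_iff₀ hR0]
      linarith [norm_nonneg f, hMr, h8]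
    -- uniform continuity on a compact ball
    set K := Metric.closedBall (0 : EuclideanSpace ℝ (Fin q)) (‖Tl‖ * R + 1) with hKdef
    have huc : UniformContinuousOn f K :=
      (isCompact_closedBall _ _).uniformContinuousOn_of_continuous f.continuous.continuousOn
    obtain ⟨δ, hδ0, hδ⟩ := Metric.uniformContinuousOn_iff.mp huc (ε / 4) (by positivity)
    set c : ℝ := min δ 1 with hcdef
    have hc0 : 0 < c := lt_min hδ0 one_pos
    have hevk : ∀ᶠ k in atTop, dist (T k) Tl < c / R :=
      Metric.tendsto_nhds.mp hTconv (c / R) (by positivity)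
    filter_upwards [hevn.prod_inl atTop, hevk.prod_inr atTop] with nk hn hk
    obtain ⟨n, k⟩ := nk
    haveI := hP n
    simp only at hn hk
    set s : Set (EuclideanSpace ℝ (Fin m)) := {x | R < ‖x‖} with hsdef
    have hs : MeasurableSet s := (isOpen_lt continuous_const continuous_norm).measurableSet
    -- pointwise bound
    have hpt : ∀ x, ‖f (T k x) - f (Tl x)‖
        ≤ ε / 4 + s.indicator (fun _ => 2 * ‖f‖) x := by
      intro x
      by_cases hx : x ∈ s
      · rw [Set.indicator_of_mem hx]
        have h1' := f.norm_coe_le_norm (T k x)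
        have h2' := f.norm_coe_le_norm (Tl x)
        have := norm_sub_le (f (T k x)) (f (Tl x))
        have hε4 : (0:ℝ) ≤ ε / 4 := by positivity
        linarith
      · rw [Set.indicator_of_notMem hx, add_zero]
        have hxR : ‖x‖ ≤ R := le_of_not_gt hx
        have hTlx : Tl x ∈ K := by
          rw [hKdef, Metric.mem_closedBall, dist_zero_right]
          calc ‖Tl x‖ ≤ ‖Tl‖ * ‖x‖ := Tl.le_opNorm x
            _ ≤ ‖Tl‖ * R := mul_le_mul_of_nonneg_left hxR (norm_nonneg _)
            _ ≤ ‖Tl‖ * R + 1 := le_add_of_nonneg_right zero_le_one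
        have hdiff : ‖T k x - Tl x‖ < c := by
          calc ‖T k x - Tl x‖ = ‖(T k - Tl) x‖ := by
                simp [ContinuousLinearMap.sub_apply]
            _ ≤ ‖T k - Tl‖ * ‖x‖ := (T k - Tl).le_opNorm x
            _ ≤ ‖T k - Tl‖ * R := mul_le_mul_of_nonneg_left hxR (norm_nonneg _)
            _ < (c / R) * R := by
                have hlt : ‖T k - Tl‖ < c / R := by rwa [dist_eq_norm] at hk
                exact mul_lt_mul_of_pos_right hlt hR0
            _ = c := div_mul_cancel₀ _ (ne_of_gt hR0)
        have hTkx : T k x ∈ K := by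
          rw [hKdef, Metric.mem_closedBall, dist_zero_right]
          have h1' : ‖T k x‖ ≤ ‖Tl x‖ + ‖T k x - Tl x‖ := by
            simpa using norm_add_le (Tl x) (T k x - Tl x)
          have h2' : ‖Tl x‖ ≤ ‖Tl‖ * R :=
            le_trans (Tl.le_opNorm x) (mul_le_mul_of_nonneg_left hxR (norm_nonneg _))
          have h3' : ‖T k x - Tl x‖ ≤ 1 := le_of_lt (lt_of_lt_of_le hdiff (min_le_right _ _))
          linarith
        have hclose : dist (T k x) (Tl x) < δ := by
          rw [dist_eq_norm]
          exact lt_of_lt_of_le hdiff (min_le_left _ _)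
        have := hδ (T k x) hTkx (Tl x) hTlx hclose
        rw [Real.dist_eq] at this
        exact le_of_lt this
    -- integrate the bound
    have hint1 : Integrable (fun x => f (T k x) - f (Tl x)) (P n) :=
      (hInt n (T k)).sub (hInt n Tl)
    have hintg : Integrable
        (fun x => ε / 4 + s.indicator (fun _ => 2 * ‖f‖) x) (P n) :=
      (integrable_const _).add ((integrable_const (2 * ‖f‖)).indicator hs)
    -- Markov bound on the tail
    have markov : (P n) s ≤ M / ENNReal.ofReal R := by
      have hsub : s ⊆ {x | ENNReal.ofReal R ≤ ENNReal.ofReal ‖x‖} := by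
        intro x hx
        exact ENNReal.ofReal_le_ofReal (le_of_lt hx)
      refine le_trans (measure_mono hsub) (le_trans
        (meas_ge_le_lintegral_div (measurable_norm.ennreal_ofReal).aemeasurable
          (ENNReal.ofReal_pos.mpr hR0).ne' ENNReal.ofReal_ne_top) ?_)
      exact ENNReal.div_le_div_right (le_of_lt hn) _
    have hmeas_toReal : ((P n) s).toReal ≤ Mr / R := by
      have hfin : M / ENNReal.ofReal R ≠ ⊤ := by
        refine (ENNReal.div_lt_top hM2.ne (ENNReal.ofReal_pos.mpr hR0).ne').ne
      have := ENNReal.toReal_mono hfin markov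
      rwa [ENNReal.toReal_div, ENNReal.toReal_ofReal hR0.le] at this
    calc ‖∫ x, (f (T k x) - f (Tl x)) ∂(P n)‖
        ≤ ∫ x, ‖f (T k x) - f (Tl x)‖ ∂(P n) := norm_integral_le_integral_norm _
      _ ≤ ∫ x, (ε / 4 + s.indicator (fun _ => 2 * ‖f‖) x) ∂(P n) :=
          integral_mono hint1.norm hintg hpt
      _ = ε / 4 + 2 * ‖f‖ * ((P n) s).toReal := by
          rw [integral_add (integrable_const _) ((integrable_const _).indicator hs),
            integral_const, integral_indicator_const _ hs, probReal_univ]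
          simp [mul_comm, measureReal_def]
      _ ≤ ε / 4 + ε / 4 := by
          have h2f : (0:ℝ) ≤ 2 * ‖f‖ := by positivity
          have := mul_le_mul_of_nonneg_left hmeas_toReal h2f
          linarith [hRbound]
      _ < ε := by linarith
  have := h1.add h2
  simpa using this
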